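/- arXiv:2409.03751 — 5 statements merged into one kernel-verified Lean document; each statement's English description precedes it below -/
import Mathlib

section
/- For every n, k ∈ ℕ with n ≥ 1 and every a ∈ {0,1,…,n−1}^k, the function f^a is monotone: for all u, v ∈ {0,1,…,n−1}^k with u ≤ v (componentwise), f^a(u) ≤ f^a(v) (componentwise). -/
/-- The function `f^a` from Definition 2 of the paper, defined coordinatewise:
`f^a_i(v) = v_i - 1` if `v_i > a_i` and `v_j ≤ a_j` for all `j < i`;
`f^a_i(v) = v_i + 1` if `v_i < a_i` and `v_j ≥ a_j` for all `j < i`;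
`f^a_i(v) = v_i` otherwise. -/
def tarskiF {k : ℕ} (a v : Fin k → ℕ) : Fin k → ℕ := fun i =>
  if a i < v i ∧ ∀ j, j < i → v j ≤ a j then v i - 1
  else if v i < a i ∧ ∀ j, j < i → a j ≤ v j then v i + 1
  else v i

/-- For every `n ≥ 1` and `a` in the grid, `f^a` is monotone with respect to the
componentwise order on the grid. -/
theorem tarskiF_monotone (n k : ℕ) (hn : 1 ≤ n)
    (a : Fin k → ℕ) (ha : ∀ i, a i < n)
    (u v : Fin k → ℕ) (hu : ∀ i, u i < n) (hv : ∀ i, v i < n)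
    (huv : u ≤ v) :
    tarskiF a u ≤ tarskiF a v := by
  intro i
  have hi : u i ≤ v i := huv i
  simp only [tarskiF]
  split_ifs with h1 h2 h3 h4 h5 h6 h7 h8 <;> try omega
  · -- u increases, v neither: show u i < v i
    have : u i < v i := by
      by_contra h
      have heq : u i = v i := le_antisymm hi (by omega)
      exact h6 ⟨heq ▸ h4.1, fun j hj => (h4.2 j hj).trans (huv j)⟩
    omega
  · -- u neither, v decreases: show u i < v i
    have : u i < v i := by
      by_contra h
      have heq : u i = v i := le_antisymm hi (by omega)
      exact h1 ⟨heq ▸ h7.1, fun j hj => (huv j).trans (h7.2 j hj)⟩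
    omega
end

section
/- For every n, k ∈ ℕ with n ≥ 1, every a ∈ {0,1,…,n−1}^k, and every v ∈ {0,1,…,n−1}^k with v ≠ a, the point v is not a fixed point of f^a; that is, f^a(v) ≠ v. Consequently, the set of fixed points of f^a is exactly {a}. -/
lemma tarskiF_ne {k : ℕ} (a v : Fin k → ℕ) (hva : v ≠ a) : tarskiF a v ≠ v := by
  classical
  have hex : ∃ i, v i ≠ a i := by
    by_contra h; push_neg at h; exact hva (funext h)
  let S := Finset.univ.filter (fun i => v i ≠ a i)
  have hS : S.Nonempty := by
    obtain ⟨i, hi⟩ := hex; exact ⟨i, by simp [S, hi]⟩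
  set i := S.min' hS with hidef
  have hi : v i ≠ a i := by
    have := S.min'_mem hS; simpa [S] using this
  have hmin : ∀ j, j < i → v j = a j := by
    intro j hj
    by_contra h
    exact absurd (S.min'_le j (by simp [S, h])) (not_le.mpr hj)
  intro hfix
  have hfi := congrFun hfix i
  simp only [tarskiF] at hfi
  rcases hi.lt_or_gt with h | h
  · rw [if_neg, if_pos] at hfi
    · omega
    · exact ⟨h, fun j hj => le_of_eq (hmin j hj).symm⟩
    · rintro ⟨h1, -⟩; omega
  · rw [if_pos ⟨h, fun j hj => le_of_eq (hmin j hj)⟩] at hfi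
    omega

lemma tarskiF_self {k : ℕ} (a : Fin k → ℕ) : tarskiF a a = a := by
  funext i
  simp [tarskiF]

/-- Every `v ≠ a` in the grid is not a fixed point of `f^a`; consequently the set of
fixed points of `f^a` on the grid is exactly `{a}`. -/
theorem tarskiF_unique_fixed_point (n k : ℕ) (hn : 1 ≤ n)
    (a : Fin k → ℕ) (ha : ∀ i, a i < n)
    (v : Fin k → ℕ) (hv : ∀ i, v i < n) (hva : v ≠ a) :
    tarskiF a v ≠ v ∧
      {w : Fin k → ℕ | (∀ i, w i < n) ∧ tarskiF a w = w} = {a} := by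
  refine ⟨tarskiF_ne a v hva, ?_⟩
  ext w
  simp only [Set.mem_setOf_eq, Set.mem_singleton_iff]
  constructor
  · rintro ⟨-, hfix⟩
    by_contra hw
    exact tarskiF_ne a w hw hfix
  · intro h
    subst h
    exact ⟨ha, tarskiF_self _⟩
end

section
/- For every n, k ∈ ℕ with n ≥ 1 and every fixed v ∈ {0,1,…,n−1}^k, the set of possible query answers Q_v = { f^a(v) : a ∈ {0,1,…,n−1}^k } has cardinality at most (k+1)^2. -/
def findOpt {k : ℕ} (p : Fin k → Prop) [DecidablePred p] : Option (Fin k) :=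
  if h : ∃ j, p j then some (Fin.find p h) else none

theorem findOpt_eq_some_iff {k : ℕ} (p : Fin k → Prop) [DecidablePred p] (i : Fin k) :
    findOpt p = some i ↔ p i ∧ ∀ j, p j → i ≤ j := by
  unfold findOpt
  split_ifs with h
  · rw [Option.some_inj, Fin.find_eq_iff]
    constructor
    · rintro ⟨hi, hj⟩
      exact ⟨hi, fun j hj' => not_lt.1 fun hl => hj j hl hj'⟩
    · rintro ⟨hi, hj⟩
      exact ⟨hi, fun j hl hj' => absurd (hj j hj') (not_le.2 hl)⟩
  · simp only [reduceCtorEq, false_iff, not_and]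
    exact fun hi => absurd ⟨i, hi⟩ h

/-- For every fixed query point `v`, the set `Q_v = { f^a(v) : a ∈ {0,…,n-1}^k }` of
possible answers has cardinality at most `(k+1)^2`. -/
theorem tarskiF_answer_set_card_le (n k : ℕ) (hn : 1 ≤ n)
    (v : Fin k → ℕ) (hv : ∀ i, v i < n) :
    Set.ncard {y : Fin k → ℕ | ∃ a : Fin k → ℕ, (∀ i, a i < n) ∧ tarskiF a v = y}
      ≤ (k + 1) ^ 2 := by
  classical
  set g : Option (Fin k) × Option (Fin k) → (Fin k → ℕ) := fun p i =>
    if p.1 = some i then v i - 1 else if p.2 = some i then v i + 1 else v i with hg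
  have hsub : {y : Fin k → ℕ | ∃ a : Fin k → ℕ, (∀ i, a i < n) ∧ tarskiF a v = y}
      ⊆ Set.range g := by
    rintro y ⟨a, -, rfl⟩
    refine ⟨(findOpt (fun i => a i < v i), findOpt (fun i => v i < a i)), ?_⟩
    funext i
    simp only [hg, tarskiF]
    by_cases h1 : a i < v i ∧ ∀ j, j < i → v j ≤ a j
    · have : findOpt (fun i => a i < v i) = some i := by
        rw [findOpt_eq_some_iff]
        exact ⟨h1.1, fun j hj => by
          by_contra hji
          exact absurd hj (not_lt.2 (h1.2 j (lt_of_not_ge hji)))⟩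
      simp [this, h1.1, h1.2]; exact fun x hx hax => absurd hax (not_lt.2 (h1.2 x hx))
    · have hD : findOpt (fun i => a i < v i) ≠ some i := by
        intro hD
        rw [findOpt_eq_some_iff] at hD
        exact h1 ⟨hD.1, fun j hj => not_lt.1 fun h => absurd (hD.2 j h) (not_le.2 hj)⟩
      by_cases h2 : v i < a i ∧ ∀ j, j < i → a j ≤ v j
      · have : findOpt (fun i => v i < a i) = some i := by
          rw [findOpt_eq_some_iff]
          exact ⟨h2.1, fun j hj => by
            by_contra hji
            exact absurd hj (not_lt.2 (h2.2 j (lt_of_not_ge hji)))⟩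
        simp [this, hD, h1, h2.1, h2.2]; exact h2.2
      · have hU : findOpt (fun i => v i < a i) ≠ some i := by
          intro hU
          rw [findOpt_eq_some_iff] at hU
          exact h2 ⟨hU.1, fun j hj => not_lt.1 fun h => absurd (hU.2 j h) (not_le.2 hj)⟩
        simp [hD, hU, h1, h2]
  calc Set.ncard {y : Fin k → ℕ | ∃ a : Fin k → ℕ, (∀ i, a i < n) ∧ tarskiF a v = y}
      ≤ Set.ncard (Set.range g) :=
        Set.ncard_le_ncard hsub (Set.finite_range g)
    _ ≤ Nat.card (Option (Fin k) × Option (Fin k)) := by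
        rw [Set.ncard_eq_toFinset_card', Set.toFinset_range, Nat.card_eq_fintype_card]
        exact (Finset.card_image_le).trans (by simp)
    _ = (k + 1) ^ 2 := by simp [Nat.card_eq_fintype_card, sq]
end

section
/- For every n, k ∈ ℕ with n ≥ 1, the map a ↦ f^a from {0,1,…,n−1}^k to the set of functions {0,1,…,n−1}^k → {0,1,…,n−1}^k is injective; consequently, the family F = { f^a : a ∈ {0,1,…,n−1}^k } consists of n^k distinct monotone functions, each having a unique fixed point. -/
lemma tarskiF_fixed_iff {k : ℕ} (a v : Fin k → ℕ) : tarskiF a v = v ↔ v = a := by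
  constructor
  · intro h
    have key : ∀ m, ∀ i : Fin k, (i : ℕ) < m → v i = a i := by
      intro m
      induction m with
      | zero => intro i hi; omega
      | succ m ihm =>
        intro i him
        have ih : ∀ j : Fin k, j < i → v j = a j := fun j hj =>
          ihm j (lt_of_lt_of_le hj (Nat.lt_succ_iff.mp him))
        have hi := congrFun h i
        simp only [tarskiF] at hi
        have hle : ∀ j, j < i → v j ≤ a j := fun j hj => (ih j hj).le
        have hge : ∀ j, j < i → a j ≤ v j := fun j hj => (ih j hj).ge
        by_cases h1 : a i < v i
        · rw [if_pos ⟨h1, hle⟩] at hi; omega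
        · rw [if_neg (fun hc => h1 hc.1)] at hi
          by_cases h2 : v i < a i
          · rw [if_pos ⟨h2, hge⟩] at hi; omega
          · omega
    funext i
    exact key ((i : ℕ) + 1) i (Nat.lt_succ_self _)
  · rintro rfl
    funext i
    simp [tarskiF]

lemma tarskiF_mono {k : ℕ} (a u v : Fin k → ℕ) (huv : u ≤ v) :
    tarskiF a u ≤ tarskiF a v := by
  intro i
  have hle : ∀ j, u j ≤ v j := huv
  simp only [tarskiF]
  by_cases hud : a i < u i ∧ ∀ j, j < i → u j ≤ a j
  · -- u decreases: u i - 1 ≤ everything v can give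
    rw [if_pos hud]
    split_ifs with h1 h2 <;> [skip; skip; skip] <;>
      first
        | (exact Nat.sub_le_sub_right (hle i) 1)
        | (have := hle i; omega)
  · rw [if_neg hud]
    by_cases hui : u i < a i ∧ ∀ j, j < i → a j ≤ u j
    · -- u increases
      rw [if_pos hui]
      by_cases hvd : a i < v i ∧ ∀ j, j < i → v j ≤ a j
      · rw [if_pos hvd]; omega
      · rw [if_neg hvd]
        by_cases hvi : v i < a i ∧ ∀ j, j < i → a j ≤ v j
        · rw [if_pos hvi]; have := hle i; omega
        · rw [if_neg hvi]
          -- v does nothing; need v i ≥ u i + 1, i.e. a i ≤ v i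
          have hq : ∀ j, j < i → a j ≤ v j := fun j hj => (hui.2 j hj).trans (hle j)
          have : ¬ v i < a i := fun hc => hvi ⟨hc, hq⟩
          omega
    · -- u unchanged
      rw [if_neg hui]
      by_cases hvd : a i < v i ∧ ∀ j, j < i → v j ≤ a j
      · rw [if_pos hvd]
        -- need u i ≤ v i - 1, i.e. u i ≤ a i
        have hq : ∀ j, j < i → u j ≤ a j := fun j hj => (hle j).trans (hvd.2 j hj)
        have : ¬ a i < u i := fun hc => hud ⟨hc, hq⟩
        omega
      · rw [if_neg hvd]
        split_ifs with h <;> have := hle i <;> omega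

/-- The map `a ↦ f^a` is injective on the grid `{0,…,n-1}^k`; consequently the family
`F = { f^a : a ∈ {0,…,n-1}^k }` consists of `n^k` distinct functions, each monotone
and each having `a` as its unique fixed point on the grid. -/
theorem tarskiF_family_injective_card (n k : ℕ) (hn : 1 ≤ n) :
    Set.InjOn (fun a : Fin k → ℕ => tarskiF a) {a : Fin k → ℕ | ∀ i, a i < n} ∧
    Set.ncard {g : (Fin k → ℕ) → (Fin k → ℕ) |
        ∃ a : Fin k → ℕ, (∀ i, a i < n) ∧ g = tarskiF a} = n ^ k ∧
    (∀ a : Fin k → ℕ, (∀ i, a i < n) →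
      (∀ u v : Fin k → ℕ, (∀ i, u i < n) → (∀ i, v i < n) → u ≤ v →
          tarskiF a u ≤ tarskiF a v) ∧
      (∀ v : Fin k → ℕ, (∀ i, v i < n) → (tarskiF a v = v ↔ v = a))) := by
  have hinj : Set.InjOn (fun a : Fin k → ℕ => tarskiF a)
      {a : Fin k → ℕ | ∀ i, a i < n} := by
    intro a _ b _ hab
    have hab' : tarskiF a = tarskiF b := hab
    have : tarskiF b a = a := by
      rw [← hab']; exact (tarskiF_fixed_iff a a).mpr rfl
    exact ((tarskiF_fixed_iff b a).mp this)
  refine ⟨hinj, ?_, fun a ha => ⟨fun u v _ _ huv => tarskiF_mono a u v huv,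
      fun v _ => tarskiF_fixed_iff a v⟩⟩
  have hset : {g : (Fin k → ℕ) → (Fin k → ℕ) |
      ∃ a : Fin k → ℕ, (∀ i, a i < n) ∧ g = tarskiF a} =
      (fun a : Fin k → ℕ => tarskiF a) '' {a : Fin k → ℕ | ∀ i, a i < n} := by
    ext g
    simp only [Set.mem_setOf_eq, Set.mem_image]
    exact ⟨fun ⟨a, h1, h2⟩ => ⟨a, h1, h2.symm⟩, fun ⟨a, h1, h2⟩ => ⟨a, h1, h2.symm⟩⟩
  rw [hset, Set.ncard_image_of_injOn hinj]
  have hS : {a : Fin k → ℕ | ∀ i, a i < n} =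
      ↑(Fintype.piFinset fun _ : Fin k => Finset.range n) := by
    ext a; simp
  rw [hS, Set.ncard_coe_finset, Fintype.card_piFinset]
  simp
end

section
/- (Hypercube instance feedback structure, case (ii) of the information argument.) Let k ∈ ℕ, let a ∈ {0,1}^k, and let v ∈ {0,1}^k. If there is no index i ∈ {1,…,k} with v_i = 0 and f^a_i(v) = 1, then a_j = 0 for every index j ∈ {1,…,k} with v_j = 0. Symmetrically, if there is no index i with v_i = 1 and f^a_i(v) = 0, then a_j = 1 for every index j with v_j = 1. -/
/-- Hypercube feedback, case (ii): on the Boolean hypercube `{0,1}^k`, if no index `i`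
has `v_i = 0` and `f^a_i(v) = 1`, then `a_j = 0` for every `j` with `v_j = 0`;
symmetrically, if no index `i` has `v_i = 1` and `f^a_i(v) = 0`, then `a_j = 1`
for every `j` with `v_j = 1`. -/
theorem tarskiF_hypercube_case_ii (k : ℕ)
    (a : Fin k → ℕ) (ha : ∀ i, a i ≤ 1)
    (v : Fin k → ℕ) (hv : ∀ i, v i ≤ 1) :
    ((¬ ∃ i : Fin k, v i = 0 ∧ tarskiF a v i = 1) →
      ∀ j : Fin k, v j = 0 → a j = 0) ∧
    ((¬ ∃ i : Fin k, v i = 1 ∧ tarskiF a v i = 0) →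
      ∀ j : Fin k, v j = 1 → a j = 1) := by
  constructor
  · intro hno
    suffices H : ∀ n (j : Fin k), j.val < n → v j = 0 → a j = 0 by
      intro j; exact H (j.val + 1) j (Nat.lt_succ_self _)
    intro n
    induction n with
    | zero => intro j hj; omega
    | succ n ih =>
      intro j hj hvj
      by_contra haj
      have := ha j
      have haj1 : a j = 1 := by omega
      have hle : ∀ j', j' < j → a j' ≤ v j' := by
        intro j' hj'
        rcases Nat.lt_or_ge (v j') 1 with h | h
        · have hv0 : v j' = 0 := by omega
          have := ih j' (by omega) hv0
          omega
        · have := hv j'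
          have := ha j'
          omega
      apply hno
      refine ⟨j, hvj, ?_⟩
      unfold tarskiF
      rw [if_neg (by omega), if_pos ⟨by omega, hle⟩]
      omega
  · intro hno
    suffices H : ∀ n (j : Fin k), j.val < n → v j = 1 → a j = 1 by
      intro j; exact H (j.val + 1) j (Nat.lt_succ_self _)
    intro n
    induction n with
    | zero => intro j hj; omega
    | succ n ih =>
      intro j hj hvj
      by_contra haj
      have := ha j
      have haj0 : a j = 0 := by omega
      have hle : ∀ j', j' < j → v j' ≤ a j' := by
        intro j' hj'
        rcases Nat.lt_or_ge (v j') 1 with h | h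
        · omega
        · have hv1 : v j' = 1 := by have := hv j'; omega
          have := ih j' (by omega) hv1
          omega
      apply hno
      refine ⟨j, hvj, ?_⟩
      unfold tarskiF
      rw [if_pos ⟨by omega, hle⟩]
      omega
end
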